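/- Let c be a positive integer, define f_1(x) = x − c and f_n(x) = x·f_{n−1}(x) − 1 for n ≥ 2. Then every f_n is irreducible over ℚ; i.e., the sequence forms a polynomial Cunningham chain of the second kind of infinite length. -/

import Mathlib

set_option maxHeartbeats 1000000

open Polynomial Finset

noncomputable def Complex.abs : AbsoluteValue ℂ ℝ :=
  IsAbsoluteValue.toAbsoluteValue (norm : ℂ → ℝ)

theorem Complex.abs_intCast (n : ℤ) : Complex.abs (n : ℂ) = |(n : ℝ)| := Complex.norm_intCast n

theorem Complex.abs_re_lt_abs {z : ℂ} : |z.re| < Complex.abs z ↔ z.im ≠ 0 := Complex.abs_re_lt_norm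

theorem Complex.normSq_eq_abs (z : ℂ) : Complex.normSq z = Complex.abs z ^ 2 :=
  Complex.normSq_eq_norm_sq z

theorem Complex.sq_abs (z : ℂ) : Complex.abs z ^ 2 = Complex.normSq z := Complex.sq_norm z

theorem Complex.re_le_abs (z : ℂ) : z.re ≤ Complex.abs z := Complex.re_le_norm z

namespace Stmt15Aux

lemma aeval_f {c : ℤ} {f : ℕ → Polynomial ℤ} {R : Type*} [CommRing R]
    (hf1 : f 1 = X - C c) (hrec : ∀ n, 2 ≤ n → f n = X * f (n - 1) - 1) :
    ∀ k, 1 ≤ k → ∀ z : R,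
      aeval z (f k) = z ^ k - (c : R) * z ^ (k - 1) - ∑ i ∈ range (k - 1), z ^ i := by
  intro k hk
  induction k, hk using Nat.le_induction with
  | base => intro z; simp [hf1]
  | succ k hk ih =>
    intro z
    rw [hrec (k + 1) (by omega)]
    simp only [map_sub, map_mul, aeval_X, map_one, Nat.add_sub_cancel]
    rw [ih z]
    obtain ⟨m, rfl⟩ : ∃ m, k = m + 1 := ⟨k - 1, by omega⟩
    simp only [Nat.add_sub_cancel]
    rw [Finset.sum_range_succ' (fun i => z ^ i) m]
    simp only [pow_succ]
    rw [← Finset.sum_mul]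
    ring


lemma monic_deg {c : ℤ} {f : ℕ → Polynomial ℤ}
    (hf1 : f 1 = X - C c) (hrec : ∀ n, 2 ≤ n → f n = X * f (n - 1) - 1) :
    ∀ k, 1 ≤ k → (f k).Monic ∧ (f k).natDegree = k := by
  intro k hk
  induction k, hk using Nat.le_induction with
  | base => exact ⟨by rw [hf1]; exact monic_X_sub_C c, by rw [hf1]; exact natDegree_X_sub_C c⟩
  | succ k hk ih =>
    rw [hrec (k + 1) (by omega)]
    simp only [Nat.add_sub_cancel]
    have hm : (X * f k).Monic := monic_X.mul ih.1
    have hd : (X * f k).natDegree = k + 1 := by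
      rw [natDegree_mul X_ne_zero ih.1.ne_zero, natDegree_X, ih.2, add_comm]
    have hsub : X * f k - 1 = X * f k - C 1 := by simp
    constructor
    · rw [hsub, sub_eq_add_neg]
      refine hm.add_of_left ?_
      have hdeg : (X * f k).degree = ((k + 1 : ℕ) : WithBot ℕ) := by
        rw [degree_eq_natDegree hm.ne_zero, hd]
      rw [hdeg]
      calc (-C (1 : ℤ)).degree ≤ 0 := by rw [degree_neg]; exact degree_C_le
        _ < ((k + 1 : ℕ) : WithBot ℕ) := by exact_mod_cast Nat.succ_pos k
    · rw [hsub, natDegree_sub_C, hd]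

lemma helper_id {K : Type*} [CommRing K] (co : K) (n : ℕ) (hn : 2 ≤ n) (x y : K) (hxy : x * y = 1) :
    x ^ n * (co * y + ∑ i ∈ range (n - 1), y ^ (n - i)) =
      co * x ^ (n - 1) + ∑ i ∈ range (n - 1), x ^ i := by
  rw [mul_add, Finset.mul_sum]
  congr 1
  · have h1 : x ^ n = x ^ (n - 1) * x := by
      rw [← pow_succ]; congr 1; omega
    calc x ^ n * (co * y) = co * (x ^ (n - 1) * (x * y)) := by rw [h1]; ring
      _ = co * x ^ (n - 1) := by rw [hxy, mul_one]
  · refine Finset.sum_congr rfl fun i hi => ?_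
    have hi' : i < n - 1 := Finset.mem_range.mp hi
    have h1 : x ^ n = x ^ i * x ^ (n - i) := by rw [← pow_add]; congr 1; omega
    have h2 : x ^ (n - i) * y ^ (n - i) = 1 := by rw [← mul_pow, hxy, one_pow]
    calc x ^ n * y ^ (n - i) = x ^ i * (x ^ (n - i) * y ^ (n - i)) := by rw [h1]; ring
      _ = x ^ i := by rw [h2, mul_one]

lemma multiset_prod_le_one (s : Multiset ℝ) (h : ∀ x ∈ s, 0 ≤ x ∧ x ≤ 1) : s.prod ≤ 1 := by
  induction s using Multiset.induction with
  | empty => simp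
  | cons a s ih =>
    rw [Multiset.prod_cons]
    have ha := h a (Multiset.mem_cons_self a s)
    have hs : s.prod ≤ 1 := ih fun x hx => h x (Multiset.mem_cons_of_mem hx)
    have hs0 : 0 ≤ s.prod := Multiset.prod_nonneg fun x hx => (h x (Multiset.mem_cons_of_mem hx)).1
    nlinarith [ha.1, ha.2]

lemma no_fact (c : ℤ) (hc : 0 < c) (f : ℕ → Polynomial ℤ)
    (hf1 : f 1 = X - C c) (hrec : ∀ n, 2 ≤ n → f n = X * f (n - 1) - 1)
    (n : ℕ) (hn : 2 ≤ n) (g h : Polynomial ℤ)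
    (hg : g.Monic) (hh : h.Monic) (hg1 : 1 ≤ g.natDegree) (hh1 : 1 ≤ h.natDegree)
    (hgh : f n = g * h) : False := by
  have hc1 : (1 : ℤ) ≤ c := hc
  have hcR : (1 : ℝ) ≤ (c : ℝ) := by exact_mod_cast hc1
  set Φ : ℝ → ℝ := fun s => (c : ℝ) * s + ∑ i ∈ range (n - 1), s ^ (n - i) with hΦdef
  have hΦapp : ∀ s : ℝ, Φ s = (c : ℝ) * s + ∑ i ∈ range (n - 1), s ^ (n - i) := fun s => rfl
  have hΦmono : ∀ s t : ℝ, 0 ≤ s → s < t → Φ s < Φ t := by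
    intro s t hs hst
    have h1 : (c : ℝ) * s < (c : ℝ) * t := by nlinarith
    have h2 : ∑ i ∈ range (n - 1), s ^ (n - i) ≤ ∑ i ∈ range (n - 1), t ^ (n - i) :=
      Finset.sum_le_sum fun i _ => pow_le_pow_left₀ hs (le_of_lt hst) _
    simpa [hΦapp] using add_lt_add_of_lt_of_le h1 h2
  have hΦcont : Continuous Φ := by
    apply Continuous.add
    · exact continuous_const.mul continuous_id
    · exact continuous_finset_sum _ fun i _ => continuous_pow _
  have hΦ0 : Φ 0 = 0 := by
    rw [hΦapp]
    rw [Finset.sum_eq_zero fun i hi => zero_pow (by have := Finset.mem_range.mp hi; omega)]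
    ring
  have hΦ1 : (1 : ℝ) < Φ 1 := by
    rw [hΦapp]
    simp only [one_pow, mul_one, Finset.sum_const, card_range, nsmul_eq_mul]
    have h1 : (1 : ℝ) ≤ ((n - 1 : ℕ) : ℝ) := by
      have : 1 ≤ n - 1 := by omega
      exact_mod_cast this
    linarith
  obtain ⟨s0, hs0mem, hΦs0⟩ : ∃ s0 ∈ Set.Ioo (0 : ℝ) 1, Φ s0 = 1 := by
    have hsub := intermediate_value_Ioo (zero_le_one) hΦcont.continuousOn
    have hmem : (1 : ℝ) ∈ Set.Ioo (Φ 0) (Φ 1) := ⟨by rw [hΦ0]; norm_num, hΦ1⟩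
    obtain ⟨s0, hs0, hval⟩ := hsub hmem
    exact ⟨s0, hs0, hval⟩
  have hs0pos : 0 < s0 := hs0mem.1
  have hs0lt1 : s0 < 1 := hs0mem.2
  set β : ℝ := 1 / s0 with hβdef
  have hβpos : 0 < β := by positivity
  have hβ1 : 1 < β := by
    rw [hβdef]
    rw [lt_div_iff₀ hs0pos]; linarith
  -- classification of complex roots
  have hclass : ∀ z : ℂ, aeval z (f n) = 0 → z = ((β : ℝ) : ℂ) ∨ Complex.abs z < 1 := by
    intro z hz
    have hE : z ^ n = (c : ℂ) * z ^ (n - 1) + ∑ i ∈ range (n - 1), z ^ i := by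
      have h0 := aeval_f hf1 hrec n (by omega) z
      rw [hz] at h0
      linear_combination -h0
    have hz0 : z ≠ 0 := by
      rintro rfl
      have e1 : n - 1 = n - 2 + 1 := by omega
      rw [e1, Finset.sum_range_succ' (fun i => (0 : ℂ) ^ i) (n - 2)] at hE
      have e2 : (0 : ℂ) ^ n = 0 := zero_pow (by omega)
      have e3 : (0 : ℂ) ^ (n - 2 + 1) = 0 := zero_pow (by omega)
      rw [e2, e3] at hE
      simp [zero_pow] at hE
    by_cases hposre : z.im = 0 ∧ 0 < z.re
    · left
      set t := z.re with ht
      have hzt : z = (t : ℂ) := by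
        apply Complex.ext
        · rw [Complex.ofReal_re]
        · rw [Complex.ofReal_im]; exact hposre.1
      have htpos : 0 < t := hposre.2
      have htroot : aeval t (f n) = 0 := by
        have h2 : (algebraMap ℝ ℂ) (aeval t (f n)) = 0 := by
          rw [← aeval_algebraMap_apply]
          rw [show (algebraMap ℝ ℂ) t = (t : ℂ) from rfl, ← hzt]
          exact hz
        rw [show (algebraMap ℝ ℂ) ((aeval t) (f n)) = (((aeval t) (f n) : ℝ) : ℂ) from rfl] at h2
        exact_mod_cast h2
      have hE' : t ^ n = (c : ℝ) * t ^ (n - 1) + ∑ i ∈ range (n - 1), t ^ i := by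
        have h0 := aeval_f hf1 hrec n (by omega) t
        rw [htroot] at h0
        linear_combination -h0
      have hxy : t * (1 / t) = 1 := by field_simp
      have hid := helper_id (c : ℝ) n hn t (1 / t) hxy
      have hΦt : Φ (1 / t) = 1 := by
        have hcalc : t ^ n * Φ (1 / t) = t ^ n * 1 := by
          rw [hΦapp, hid, mul_one, ← hE']
        exact mul_left_cancel₀ (pow_ne_zero n htpos.ne') hcalc
      have h1t : 1 / t = s0 := by
        rcases lt_trichotomy (1 / t) s0 with hlt | heq | hgt
        · have := hΦmono _ _ (by positivity) hlt
          rw [hΦt, hΦs0] at this; linarith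
        · exact heq
        · have := hΦmono _ _ (le_of_lt hs0pos) hgt
          rw [hΦt, hΦs0] at this; linarith
      have htβ : t = β := by
        rw [hβdef, ← h1t]
        field_simp
      rw [hzt, htβ]
    · right
      set r := Complex.abs z with hr
      have hrpos : 0 < r := by
        rw [hr]; exact AbsoluteValue.pos Complex.abs hz0
      -- Sub A : r < β
      have hxy : z * z⁻¹ = 1 := mul_inv_cancel₀ hz0
      have hid := helper_id (c : ℂ) n hn z z⁻¹ hxy
      rw [← hE] at hid
      have hw : (c : ℂ) * z⁻¹ + ∑ i ∈ range (n - 1), (z⁻¹) ^ (n - i) = 1 := by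
        have : z ^ n * ((c : ℂ) * z⁻¹ + ∑ i ∈ range (n - 1), (z⁻¹) ^ (n - i)) = z ^ n * 1 := by
          rw [hid, mul_one]
        exact mul_left_cancel₀ (pow_ne_zero n hz0) this
      have hre : (c : ℝ) * (z⁻¹).re + ∑ i ∈ range (n - 1), ((z⁻¹) ^ (n - i)).re = 1 := by
        have h4 := congrArg Complex.re hw
        simpa [Complex.add_re, Complex.mul_re, Complex.intCast_re, Complex.intCast_im,
          Complex.re_sum] using h4
      have hwstrict : (z⁻¹).re < Complex.abs z⁻¹ := by
        by_cases him : z.im = 0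
        · have hzre : z.re < 0 := by
            rcases lt_trichotomy z.re 0 with hlt | heq | hgt
            · exact hlt
            · exact absurd (Complex.ext heq him : z = 0) hz0
            · exact absurd ⟨him, hgt⟩ hposre
          have h5 : (z⁻¹).re < 0 := by
            rw [Complex.inv_re]
            have : 0 < Complex.normSq z := Complex.normSq_pos.mpr hz0
            exact div_neg_of_neg_of_pos hzre this
          have h6 : 0 < Complex.abs z⁻¹ := AbsoluteValue.pos Complex.abs (inv_ne_zero hz0)
          linarith
        · have h5 : (z⁻¹).im ≠ 0 := by
            rw [Complex.inv_im]
            have hns : 0 < Complex.normSq z := Complex.normSq_pos.mpr hz0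
            intro hcon
            apply him
            field_simp at hcon
            linarith
          have := Complex.abs_re_lt_abs.mpr h5
          calc (z⁻¹).re ≤ |(z⁻¹).re| := le_abs_self _
            _ < Complex.abs z⁻¹ := this
      have hsumle : ∑ i ∈ range (n - 1), ((z⁻¹) ^ (n - i)).re ≤
          ∑ i ∈ range (n - 1), (Complex.abs z⁻¹) ^ (n - i) := by
        refine Finset.sum_le_sum fun i _ => ?_
        calc ((z⁻¹) ^ (n - i)).re ≤ Complex.abs ((z⁻¹) ^ (n - i)) := Complex.re_le_abs _
          _ = (Complex.abs z⁻¹) ^ (n - i) := by rw [map_pow]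
      have hΦr : 1 < Φ (Complex.abs z⁻¹) := by
        rw [hΦapp]
        have hcmul : (c : ℝ) * (z⁻¹).re < (c : ℝ) * Complex.abs z⁻¹ := by nlinarith
        linarith [hre, hsumle, hcmul]
      have hinv : Complex.abs z⁻¹ = r⁻¹ := by rw [map_inv₀, hr]
      have hs0r : s0 < r⁻¹ := by
        rcases lt_trichotomy r⁻¹ s0 with hlt | heq | hgt
        · have := hΦmono _ _ (by positivity) hlt
          rw [hΦs0] at this
          rw [hinv] at hΦr
          linarith
        · rw [hinv, heq, hΦs0] at hΦr; linarith
        · exact hgt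
      have hrβ : r < β := by
        rw [hβdef]
        rw [lt_div_iff₀ hs0pos]
        calc r * s0 < r * r⁻¹ := by
              exact mul_lt_mul_of_pos_left hs0r hrpos
          _ = 1 := mul_inv_cancel₀ hrpos.ne'
      -- now exclude r ≥ 1
      by_contra hge
      push_neg at hge
      -- identity I in terms of m where n = m+1
      obtain ⟨m, hm⟩ : ∃ m, n = m + 1 := ⟨n - 1, by omega⟩
      have hm1 : 1 ≤ m := by omega
      have hE2 : z ^ (m + 1) = (c : ℂ) * z ^ m + ∑ i ∈ range m, z ^ i := by
        rw [hm, Nat.add_sub_cancel] at hE; exact hE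
      have hgeom : z * (∑ i ∈ range m, z ^ i) = (∑ i ∈ range m, z ^ i) + z ^ m - 1 := by
        have h1 : ∑ i ∈ range (m + 1), z ^ i = (∑ i ∈ range m, z ^ (i + 1)) + 1 := by
          rw [Finset.sum_range_succ' (fun i => z ^ i) m]; simp
        have h2 : ∑ i ∈ range (m + 1), z ^ i = (∑ i ∈ range m, z ^ i) + z ^ m :=
          Finset.sum_range_succ _ _
        have h3 : ∑ i ∈ range m, z ^ (i + 1) = z * ∑ i ∈ range m, z ^ i := by
          rw [Finset.mul_sum]
          exact Finset.sum_congr rfl fun i _ => by rw [pow_succ]; ring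
        linear_combination -h3 - h1 + h2
      have hI : ((c : ℂ) + 1) * z ^ (m + 1) = z ^ (m + 2) + ((c : ℂ) - 1) * z ^ m + 1 := by
        linear_combination (1 - z) * hE2 - hgeom
      rcases eq_or_lt_of_le hge with hr1 | hgt1
      · -- |z| = 1 : show z = 1, contradiction with hposre
        have hr1' : Complex.abs z = 1 := hr1.symm
        have hconj : z * (starRingEnd ℂ) z = 1 := by
          rw [Complex.mul_conj, Complex.normSq_eq_abs, hr1']
          norm_num
        set u := (starRingEnd ℂ) z with hu
        have e1 : z ^ (m + 1) * u ^ (m + 1) = 1 := by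
          rw [← mul_pow, hconj, one_pow]
        have e0 : z ^ m * u ^ m = 1 := by
          rw [← mul_pow, hconj, one_pow]
        have key : ((c : ℂ) + 1) = z + ((c : ℂ) - 1) * u + u ^ (m + 1) := by
          linear_combination (u ^ (m + 1)) * hI - ((c : ℂ) + 1) * e1 + z * e1 +
            ((c : ℂ) - 1) * u * e0
        have hkeyre := congrArg Complex.re key
        have hure : u.re = z.re := Complex.conj_re z
        have hupow : (u ^ (m + 1)).re = (z ^ (m + 1)).re := by
          rw [hu, ← map_pow]
          exact Complex.conj_re _
        simp only [Complex.add_re, Complex.mul_re, Complex.intCast_re, Complex.intCast_im,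
          Complex.one_re, Complex.sub_re, Complex.sub_im, Complex.one_im] at hkeyre
        rw [hure, hupow] at hkeyre
        -- hkeyre : c + 1 = z.re + ((c - 1) * z.re - 0) + (z^(m+1)).re  (roughly)
        have hrez : z.re ≤ 1 := by
          calc z.re ≤ Complex.abs z := Complex.re_le_abs z
            _ = 1 := hr1'
        have hrezn : (z ^ (m + 1)).re ≤ 1 := by
          calc (z ^ (m + 1)).re ≤ Complex.abs (z ^ (m + 1)) := Complex.re_le_abs _
            _ = 1 := by rw [map_pow, hr1', one_pow]
        have hzre1 : z.re = 1 := by nlinarith [hkeyre]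
        have hzim0 : z.im = 0 := by
          have hsq : z.re * z.re + z.im * z.im = 1 := by
            have := Complex.sq_abs z
            rw [hr1'] at this
            rw [Complex.normSq_apply] at this
            linarith [this]
          nlinarith [hsq, hzre1]
        exact absurd ⟨hzim0, by rw [hzre1]; norm_num⟩ hposre
      · -- |z| > 1 : contradiction with r < β
        have habsI : ((c : ℝ) + 1) * r ^ (m + 1) ≤ r ^ (m + 2) + ((c : ℝ) - 1) * r ^ m + 1 := by
          have hL : Complex.abs (((c : ℂ) + 1) * z ^ (m + 1)) = ((c : ℝ) + 1) * r ^ (m + 1) := by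
            rw [map_mul, map_pow, ← hr]
            congr 1
            have : ((c : ℂ) + 1) = (((c + 1 : ℤ)) : ℂ) := by push_cast; ring
            rw [this, Complex.abs_intCast]
            have : ((c + 1 : ℤ) : ℝ) = (c : ℝ) + 1 := by push_cast; ring
            rw [this]
            rw [abs_of_pos (by linarith)]
          have hR : Complex.abs (z ^ (m + 2) + ((c : ℂ) - 1) * z ^ m + 1) ≤
              r ^ (m + 2) + ((c : ℝ) - 1) * r ^ m + 1 := by
            calc Complex.abs (z ^ (m + 2) + ((c : ℂ) - 1) * z ^ m + 1)
                ≤ Complex.abs (z ^ (m + 2) + ((c : ℂ) - 1) * z ^ m) + Complex.abs 1 :=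
                  Complex.abs.add_le _ _
              _ ≤ Complex.abs (z ^ (m + 2)) + Complex.abs (((c : ℂ) - 1) * z ^ m) + 1 := by
                  have := Complex.abs.add_le (z ^ (m + 2)) (((c : ℂ) - 1) * z ^ m)
                  simp only [map_one]
                  linarith
              _ = r ^ (m + 2) + ((c : ℝ) - 1) * r ^ m + 1 := by
                  rw [map_pow, map_mul, map_pow, ← hr]
                  congr 2
                  have h7 : ((c : ℂ) - 1) = (((c - 1 : ℤ)) : ℂ) := by push_cast; ring
                  rw [h7, Complex.abs_intCast]
                  have h8 : ((c - 1 : ℤ) : ℝ) = (c : ℝ) - 1 := by push_cast; ring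
                  rw [h8, abs_of_nonneg (by linarith)]
          calc ((c : ℝ) + 1) * r ^ (m + 1) = Complex.abs (((c : ℂ) + 1) * z ^ (m + 1)) := hL.symm
            _ = Complex.abs (z ^ (m + 2) + ((c : ℂ) - 1) * z ^ m + 1) := by rw [hI]
            _ ≤ r ^ (m + 2) + ((c : ℝ) - 1) * r ^ m + 1 := hR
        -- f(r) < 0 since 1 < r < β
        have hΦrr : 1 < Φ (1 / r) := by
          have h1r : s0 < 1 / r := by
            rw [hβdef] at hrβ
            rw [lt_div_iff₀ hrpos]
            calc s0 * r < s0 * (1 / s0) := by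
                  exact mul_lt_mul_of_pos_left hrβ hs0pos
              _ = 1 := by field_simp
          have := hΦmono s0 (1 / r) (le_of_lt hs0pos) h1r
          rw [hΦs0] at this; linarith
        have hxyr : r * (1 / r) = 1 := by field_simp
        have hidr := helper_id (c : ℝ) n hn r (1 / r) hxyr
        have hfr : r ^ (m + 1) < (c : ℝ) * r ^ m + ∑ i ∈ range m, r ^ i := by
          have h9 : r ^ n < r ^ n * Φ (1 / r) := by
            nlinarith [pow_pos hrpos n, hΦrr]
          rw [hΦapp] at h9
          rw [hidr] at h9
          rw [hm, Nat.add_sub_cancel] at h9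
          exact h9
        have hgeomr : (∑ i ∈ range m, r ^ i) * (r - 1) = r ^ m - 1 := geom_sum_mul r m
        have hr1pos : 0 < r - 1 := by linarith
        have hmul := mul_lt_mul_of_pos_right hfr hr1pos
        have e1 : r ^ (m + 1) * (r - 1) = r ^ (m + 2) - r ^ (m + 1) := by ring
        have e2 : ((c : ℝ) * r ^ m + ∑ i ∈ range m, r ^ i) * (r - 1) =
            (c : ℝ) * r ^ (m + 1) - (c : ℝ) * r ^ m + (r ^ m - 1) := by
          rw [add_mul, hgeomr]; ring
        rw [e1, e2] at hmul
        linarith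
  -- helper
  have pos_of_mul_pos : ∀ a b : ℝ, 0 < a → 0 < a * b → 0 < b := by
    intro a b ha hab; nlinarith
  -- factor root lemma
  have hfact : ∀ p : Polynomial ℤ, p.Monic → 1 ≤ p.natDegree → p.coeff 0 ≠ 0 →
      (∀ z : ℂ, aeval z p = 0 → aeval z (f n) = 0) → aeval ((β : ℝ) : ℂ) p = 0 := by
    intro p hp hdeg h0 hroots
    by_contra hne
    set P := p.map (Int.castRingHom ℂ) with hP
    have hPmonic : P.Monic := hp.map _
    have hPdeg : P.natDegree = p.natDegree := hp.natDegree_map _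
    have hsplit : Splits P := IsAlgClosed.splits P
    have hcard : Multiset.card P.roots = p.natDegree := by
      rw [splits_iff_card_roots.mp hsplit, hPdeg]
    have hroot_iff : ∀ z : ℂ, z ∈ P.roots → aeval z p = 0 := by
      intro z hzmem
      have h1 : IsRoot P z := isRoot_of_mem_roots hzmem
      rwa [hP, IsRoot, eval_map, ← algebraMap_int_eq, ← aeval_def] at h1
    have hsmall : ∀ z ∈ P.roots, Complex.abs z < 1 := by
      intro z hzmem
      rcases hclass z (hroots z (hroot_iff z hzmem)) with h1 | h1
      · exact absurd (h1 ▸ hroot_iff z hzmem) hne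
      · exact h1
    have hprodP : P = (Multiset.map (fun a => X - C a) P.roots).prod :=
      hsplit.eq_prod_roots_of_monic hPmonic
    have habs : Complex.abs (eval 0 P) =
        (Multiset.map (fun a => Complex.abs a) P.roots).prod := by
      conv_lhs => rw [hprodP]
      rw [eval_multiset_prod, Multiset.map_map]
      rw [map_multiset_prod Complex.abs, Multiset.map_map]
      congr 1
      apply Multiset.map_congr rfl
      intro a _
      simp
    have h1le : (1 : ℝ) ≤ Complex.abs (eval 0 P) := by
      have he : eval 0 P = ((p.coeff 0 : ℤ) : ℂ) := by
        rw [← coeff_zero_eq_eval_zero, hP, coeff_map]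
        rfl
      rw [he, Complex.abs_intCast]
      have := Int.one_le_abs h0
      exact_mod_cast this
    have hcpos : 0 < Multiset.card P.roots := by rw [hcard]; omega
    obtain ⟨a, ha⟩ := Multiset.card_pos_iff_exists_mem.mp hcpos
    obtain ⟨s, hs⟩ := Multiset.exists_cons_of_mem ha
    have hlt : (Multiset.map (fun a => Complex.abs a) P.roots).prod < 1 := by
      rw [hs, Multiset.map_cons, Multiset.prod_cons]
      have ha1 : Complex.abs a < 1 := hsmall a ha
      have hs1 : (Multiset.map (fun a => Complex.abs a) s).prod ≤ 1 := by
        apply multiset_prod_le_one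
        intro x hx
        obtain ⟨b, hb, rfl⟩ := Multiset.mem_map.mp hx
        have hbmem : b ∈ P.roots := by rw [hs]; exact Multiset.mem_cons_of_mem hb
        exact ⟨AbsoluteValue.nonneg _ _, le_of_lt (hsmall b hbmem)⟩
      have hs0' : 0 ≤ (Multiset.map (fun a => Complex.abs a) s).prod := by
        apply Multiset.prod_nonneg
        intro x hx
        obtain ⟨b, hb, rfl⟩ := Multiset.mem_map.mp hx
        exact AbsoluteValue.nonneg _ _
      nlinarith [AbsoluteValue.nonneg Complex.abs a]
    rw [habs] at h1le
    linarith
  -- zero coefficients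
  have hg0 : aeval (0 : ℂ) (f n) = -1 := by
    rw [aeval_f hf1 hrec n (by omega) (0 : ℂ)]
    have e1 : n - 1 = n - 2 + 1 := by omega
    rw [e1, Finset.sum_range_succ' (fun i => (0 : ℂ) ^ i) (n - 2)]
    have e2 : (0 : ℂ) ^ n = 0 := zero_pow (by omega)
    have e3 : (0 : ℂ) ^ (n - 2 + 1) = 0 := zero_pow (by omega)
    rw [e2, e3]
    simp [zero_pow]
  have hmulz : aeval (0 : ℂ) g * aeval (0 : ℂ) h = -1 := by
    rw [← map_mul, ← hgh]
    exact hg0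
  have hgz : g.coeff 0 ≠ 0 := by
    intro hcon
    have hzz : aeval (0 : ℂ) g = 0 := by
      rw [aeval_def, eval₂_at_zero, hcon]; simp
    rw [hzz, zero_mul] at hmulz; norm_num at hmulz
  have hhz : h.coeff 0 ≠ 0 := by
    intro hcon
    have hzz : aeval (0 : ℂ) h = 0 := by
      rw [aeval_def, eval₂_at_zero, hcon]; simp
    rw [hzz, mul_zero] at hmulz; norm_num at hmulz
  have hgroots : ∀ z : ℂ, aeval z g = 0 → aeval z (f n) = 0 := by
    intro z hzz; rw [hgh, map_mul, hzz, zero_mul]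
  have hhroots : ∀ z : ℂ, aeval z h = 0 → aeval z (f n) = 0 := by
    intro z hzz; rw [hgh, map_mul, hzz, mul_zero]
  have hgβC := hfact g hg hg1 hgz hgroots
  have hhβC := hfact h hh hh1 hhz hhroots
  have hgβ : aeval β g = 0 := by
    have h2 : (algebraMap ℝ ℂ) (aeval β g) = 0 := by
      rw [← aeval_algebraMap_apply]; exact hgβC
    rw [show (algebraMap ℝ ℂ) ((aeval β) g) = (((aeval β) g : ℝ) : ℂ) from rfl] at h2
    exact_mod_cast h2
  have hhβ : aeval β h = 0 := by
    have h2 : (algebraMap ℝ ℂ) (aeval β h) = 0 := by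
      rw [← aeval_algebraMap_apply]; exact hhβC
    rw [show (algebraMap ℝ ℂ) ((aeval β) h) = (((aeval β) h : ℝ) : ℂ) from rfl] at h2
    exact_mod_cast h2
  have hfβ : aeval β (f n) = 0 := by rw [hgh, map_mul, hgβ, zero_mul]
  -- downward positivity chain
  have hposd : ∀ d : ℕ, d ≤ n - 2 → 0 < aeval β (f (n - 1 - d)) := by
    intro d
    induction d with
    | zero =>
      intro _
      have heq : aeval β (f n) = β * aeval β (f (n - 1)) - 1 := by
        rw [hrec n hn]; simp
      rw [hfβ] at heq
      have hA : 0 < β * aeval β (f (n - 1)) := by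
        rw [show β * aeval β (f (n - 1)) = 1 by linarith]; norm_num
      rw [Nat.sub_zero]
      exact pos_of_mul_pos _ _ hβpos hA
    | succ d ih =>
      intro hd
      have ih' := ih (by omega)
      have hk2 : 2 ≤ n - 1 - d := by omega
      have heq : aeval β (f (n - 1 - d)) = β * aeval β (f (n - 1 - d - 1)) - 1 := by
        rw [hrec (n - 1 - d) hk2]; simp
      have he : n - 1 - d - 1 = n - 1 - (d + 1) := by omega
      rw [he] at heq
      have hA : 0 < β * aeval β (f (n - 1 - (d + 1))) := by linarith
      exact pos_of_mul_pos _ _ hβpos hA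
  have hposk : ∀ k, 1 ≤ k → k ≤ n - 1 → 0 < aeval β (f k) := by
    intro k hk1 hk2
    have he : k = n - 1 - (n - 1 - k) := by omega
    rw [he]
    exact hposd (n - 1 - k) (by omega)
  -- derivative positivity chain
  have hder : ∀ k, 1 ≤ k → k ≤ n → 0 < aeval β (derivative (f k)) := by
    intro k hk1
    induction k, hk1 using Nat.le_induction with
    | base =>
      intro _
      rw [hf1, derivative_sub, derivative_X, derivative_C]
      simp
    | succ k hk ih =>
      intro hk2
      have hdk : derivative (f (k + 1)) = f k + X * derivative (f k) := by
        rw [hrec (k + 1) (by omega)]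
        simp only [Nat.add_sub_cancel]
        rw [derivative_sub, derivative_mul, derivative_X, derivative_one]
        ring
      rw [hdk, map_add, map_mul, aeval_X]
      have h1 := hposk k hk (by omega)
      have h2 := ih (by omega)
      nlinarith
  have hder0 : aeval β (derivative (f n)) = 0 := by
    have hdm : derivative (f n) = derivative g * h + g * derivative h := by
      rw [hgh, derivative_mul]
    rw [hdm, map_add, map_mul, map_mul, hgβ, hhβ]
    ring
  have := hder n (by omega) le_rfl
  linarith

end Stmt15Aux

theorem stmt15 (c : ℤ) (hc : 0 < c) (f : ℕ → Polynomial ℤ)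
    (hf1 : f 1 = X - C c)
    (hrec : ∀ n, 2 ≤ n → f n = X * f (n - 1) - 1) :
    ∀ n, 1 ≤ n → Irreducible ((f n).map (Int.castRingHom ℚ)) := by
  intro n hn
  rcases eq_or_lt_of_le hn with h1 | h2
  · rw [← h1, hf1, Polynomial.map_sub, map_X, map_C]
    exact irreducible_X_sub_C _
  · have hn2 : 2 ≤ n := h2
    have hmonic := (Stmt15Aux.monic_deg hf1 hrec n (by omega)).1
    have hdeg := (Stmt15Aux.monic_deg hf1 hrec n (by omega)).2
    have hirr : Irreducible (f n) := by
      constructor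
      · intro hu
        have := natDegree_eq_zero_of_isUnit hu
        omega
      · intro a b hab
        by_contra hcon
        push_neg at hcon
        obtain ⟨hna, hnb⟩ := hcon
        have hlc : a.leadingCoeff * b.leadingCoeff = 1 := by
          rw [← leadingCoeff_mul, ← hab]; exact hmonic
        have ha0 : a ≠ 0 := by
          rintro rfl; rw [leadingCoeff_zero, zero_mul] at hlc; norm_num at hlc
        have hb0 : b ≠ 0 := by
          rintro rfl; rw [leadingCoeff_zero, mul_zero] at hlc; norm_num at hlc
        have hdab : a.natDegree + b.natDegree = n := by
          rw [← natDegree_mul ha0 hb0, ← hab, hdeg]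
        have hda : 1 ≤ a.natDegree := by
          rcases Nat.eq_zero_or_pos a.natDegree with h0 | h0
          · exfalso
            apply hna
            have hcoe : a.coeff 0 = a.leadingCoeff := by rw [leadingCoeff, h0]
            rw [eq_C_of_natDegree_eq_zero h0]
            exact isUnit_C.mpr (IsUnit.of_mul_eq_one b.leadingCoeff (by rw [hcoe]; exact hlc))
          · exact h0
        have hdb : 1 ≤ b.natDegree := by
          rcases Nat.eq_zero_or_pos b.natDegree with h0 | h0
          · exfalso
            apply hnb
            have hcoe : b.coeff 0 = b.leadingCoeff := by rw [leadingCoeff, h0]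
            rw [eq_C_of_natDegree_eq_zero h0]
            refine isUnit_C.mpr (IsUnit.of_mul_eq_one a.leadingCoeff ?_)
            rw [hcoe, mul_comm]; exact hlc
          · exact h0
        rcases Int.mul_eq_one_iff_eq_one_or_neg_one.mp hlc with ⟨ha1, hb1⟩ | ⟨ha1, hb1⟩
        · exact Stmt15Aux.no_fact c hc f hf1 hrec n hn2 a b ha1 hb1 hda hdb hab
        · have hma : (-a).Monic := by
            have : (-a).leadingCoeff = 1 := by rw [leadingCoeff_neg, ha1]; ring
            exact this
          have hmb : (-b).Monic := by
            have : (-b).leadingCoeff = 1 := by rw [leadingCoeff_neg, hb1]; ring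
            exact this
          refine Stmt15Aux.no_fact c hc f hf1 hrec n hn2 (-a) (-b) hma hmb ?_ ?_ ?_
          · rwa [natDegree_neg]
          · rwa [natDegree_neg]
          · rw [neg_mul_neg]; exact hab
    exact (Polynomial.IsPrimitive.Int.irreducible_iff_irreducible_map_cast
      hmonic.isPrimitive).mp hirr
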